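/- Let p be a prime and let σ_j = Σ_{i=0}^{j} p^i. If n = Σ_{j=0}^{k} b_j σ_j for nonnegative integers b_0, …, b_k with n ≥ 1, then λ_p(n) ≤ Σ_{j=0}^{k} b_j p^j. -/

import Mathlib

/-- The row space of a matrix over `ZMod p`: all linear combinations of its rows. -/
def rowSpace {p m n : ℕ} (M : Matrix (Fin m) (Fin n) (ZMod p)) :
    Submodule (ZMod p) (Fin n → ZMod p) :=
  Submodule.span (ZMod p) {v | ∃ i, v = M i}

/-- The capacity of a matrix: the maximal Hamming weight of a vector in its row space. -/
noncomputable def capacity {p m n : ℕ} (M : Matrix (Fin m) (Fin n) (ZMod p)) : ℕ :=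
  sSup (hammingNorm '' (rowSpace M : Set (Fin n → ZMod p)))

/-- `lambdaP p n` is the minimum capacity over all matrices over `𝔽_p`
with `n` columns, none of which is a zero column.  (For `n = 0` this gives `0`.) -/
noncomputable def lambdaP (p n : ℕ) : ℕ :=
  sInf {c | ∃ (m : ℕ) (M : Matrix (Fin m) (Fin n) (ZMod p)),
    (∀ j, ∃ i, M i j ≠ 0) ∧ c = capacity M}

/-- `sigmaP p k = 1 + p + ⋯ + p^k`. -/
def sigmaP (p k : ℕ) : ℕ := ∑ j ∈ Finset.range (k + 1), p ^ j

/-! ### Auxiliary machinery -/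

lemma hn_eq {ι R : Type*} [Fintype ι] [DecidableEq R] [Zero R] (v : ι → R) :
    hammingNorm v = ∑ i, if v i ≠ 0 then 1 else 0 := by
  simp [hammingNorm, Finset.card_filter]

lemma hn_comp_equiv {ι κ R : Type*} [Fintype ι] [Fintype κ] [DecidableEq R] [Zero R]
    (e : ι ≃ κ) (v : κ → R) : hammingNorm (v ∘ e) = hammingNorm v := by
  rw [hn_eq, hn_eq]
  exact Equiv.sum_comp e (fun k => if v k ≠ 0 then 1 else 0)

/-- Extension of a vector by zero on the left summand. -/
def extl (R : Type*) [Semiring R] (β₁ β₂ : Type*) : (β₁ → R) →ₗ[R] (β₁ ⊕ β₂ → R) where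
  toFun u := Sum.elim u 0
  map_add' u v := by funext x; cases x <;> simp
  map_smul' c u := by funext x; cases x <;> simp

/-- Extension of a vector by zero on the right summand. -/
def extr (R : Type*) [Semiring R] (β₁ β₂ : Type*) : (β₂ → R) →ₗ[R] (β₁ ⊕ β₂ → R) where
  toFun u := Sum.elim 0 u
  map_add' u v := by funext x; cases x <;> simp
  map_smul' c u := by funext x; cases x <;> simp

lemma hn_sum_elim {β₁ β₂ R : Type*} [Fintype β₁] [Fintype β₂] [DecidableEq R] [Zero R]
    (u : β₁ → R) (w : β₂ → R) :
    hammingNorm (Sum.elim u w) = hammingNorm u + hammingNorm w := by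
  rw [hn_eq, hn_eq, hn_eq, Fintype.sum_sum_type]
  rfl

/-- A good matrix: no zero column, and every row-space vector has Hamming weight `≤ c`. -/
def GoodM {α β : Type} (p : ℕ) [Fintype β] (M : Matrix α β (ZMod p)) (c : ℕ) : Prop :=
  (∀ j, ∃ i, M i j ≠ 0) ∧
  ∀ v ∈ Submodule.span (ZMod p) {w | ∃ i, w = M i}, hammingNorm v ≤ c

/-- There is a good matrix with `n` columns and capacity bound `c`. -/
def GoodP (p n c : ℕ) : Prop :=
  ∃ (α β : Type) (_ : Fintype α) (_ : Fintype β) (M : Matrix α β (ZMod p)),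
    Fintype.card β = n ∧ GoodM p M c

lemma goodP_lambda {p n c : ℕ} (h : GoodP p n c) : lambdaP p n ≤ c := by
  obtain ⟨α, β, hα, hβ, M, hcard, hcols, hbound⟩ := h
  let fa : Fin (Fintype.card α) ≃ α := (Fintype.equivFin α).symm
  let fb : Fin n ≃ β := (finCongr hcard.symm).trans (Fintype.equivFin β).symm
  set M' : Matrix (Fin (Fintype.card α)) (Fin n) (ZMod p) :=
    fun i j => M (fa i) (fb j) with hM'
  have hrows : {w : Fin n → ZMod p | ∃ i, w = M' i}
      = (LinearMap.funLeft (ZMod p) (ZMod p) fb) '' {w | ∃ a, w = M a} := by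
    ext w
    constructor
    · rintro ⟨i, rfl⟩
      exact ⟨M (fa i), ⟨fa i, rfl⟩, rfl⟩
    · rintro ⟨u, ⟨a, rfl⟩, rfl⟩
      refine ⟨fa.symm a, ?_⟩
      funext j
      simp [LinearMap.funLeft, hM']
  have hcap : capacity M' ≤ c := by
    apply csSup_le
    · exact ⟨hammingNorm (0 : Fin n → ZMod p), 0, Submodule.zero_mem _, rfl⟩
    · rintro x ⟨v, hv, rfl⟩
      rw [rowSpace, hrows, ← Submodule.map_span] at hv
      obtain ⟨u, hu, rfl⟩ := hv
      have : (LinearMap.funLeft (ZMod p) (ZMod p) fb) u = u ∘ fb := rfl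
      rw [this, hn_comp_equiv]
      exact hbound u hu
  refine le_trans (Nat.sInf_le ?_) hcap
  refine ⟨_, M', ?_, rfl⟩
  intro j
  obtain ⟨a, ha⟩ := hcols (fb j)
  exact ⟨fa.symm a, by simpa [hM'] using ha⟩

lemma goodP_zero (p : ℕ) : GoodP p 0 0 := by
  refine ⟨Empty, Empty, inferInstance, inferInstance, fun i _ => 0, by simp, ?_, ?_⟩
  · rintro ⟨⟩
  · intro v _
    rw [hn_eq]
    simp

lemma goodP_mono {p n c c' : ℕ} (h : GoodP p n c) (hcc : c ≤ c') : GoodP p n c' := by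
  obtain ⟨α, β, i1, i2, M, hcard, hcols, hb⟩ := h
  exact ⟨α, β, i1, i2, M, hcard, hcols, fun v hv => le_trans (hb v hv) hcc⟩

lemma goodP_add {p n₁ c₁ n₂ c₂ : ℕ} (h₁ : GoodP p n₁ c₁) (h₂ : GoodP p n₂ c₂) :
    GoodP p (n₁ + n₂) (c₁ + c₂) := by
  obtain ⟨α₁, β₁, i1, i2, M₁, hc₁, hcols₁, hb₁⟩ := h₁
  obtain ⟨α₂, β₂, i3, i4, M₂, hc₂, hcols₂, hb₂⟩ := h₂
  refine ⟨α₁ ⊕ α₂, β₁ ⊕ β₂, inferInstance, inferInstance,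
    Sum.elim (fun i => extl (ZMod p) β₁ β₂ (M₁ i)) (fun i => extr (ZMod p) β₁ β₂ (M₂ i)),
    by simp [hc₁, hc₂], ?_, ?_⟩
  · rintro (j | j)
    · obtain ⟨i, hi⟩ := hcols₁ j
      exact ⟨Sum.inl i, by simpa [extl] using hi⟩
    · obtain ⟨i, hi⟩ := hcols₂ j
      exact ⟨Sum.inr i, by simpa [extr] using hi⟩
  · intro v hv
    have hrows : {w : β₁ ⊕ β₂ → ZMod p | ∃ i, w = Sum.elim
          (fun i => extl (ZMod p) β₁ β₂ (M₁ i)) (fun i => extr (ZMod p) β₁ β₂ (M₂ i)) i}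
        = (extl (ZMod p) β₁ β₂) '' {w | ∃ i, w = M₁ i}
          ∪ (extr (ZMod p) β₁ β₂) '' {w | ∃ i, w = M₂ i} := by
      ext w
      constructor
      · rintro ⟨(i | i), rfl⟩
        · exact Or.inl ⟨M₁ i, ⟨i, rfl⟩, rfl⟩
        · exact Or.inr ⟨M₂ i, ⟨i, rfl⟩, rfl⟩
      · rintro (⟨u, ⟨i, rfl⟩, rfl⟩ | ⟨u, ⟨i, rfl⟩, rfl⟩)
        · exact ⟨Sum.inl i, rfl⟩
        · exact ⟨Sum.inr i, rfl⟩
    rw [hrows, Submodule.span_union, ← Submodule.map_span, ← Submodule.map_span] at hv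
    obtain ⟨x, hx, y, hy, rfl⟩ := Submodule.mem_sup.mp hv
    obtain ⟨u₁, hu₁, rfl⟩ := hx
    obtain ⟨u₂, hu₂, rfl⟩ := hy
    have : extl (ZMod p) β₁ β₂ u₁ + extr (ZMod p) β₁ β₂ u₂ = Sum.elim u₁ u₂ := by
      funext x; cases x <;> simp [extl, extr]
    rw [this, hn_sum_elim]
    exact Nat.add_le_add (hb₁ u₁ hu₁) (hb₂ u₂ hu₂)

lemma goodP_step {p : ℕ} [hp : Fact p.Prime] {n c : ℕ} (h : GoodP p n c) :
    GoodP p (n * p + 1) (max (p * c) (n * (p - 1) + 1)) := by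
  haveI : NeZero p := ⟨hp.out.ne_zero⟩
  obtain ⟨α, β, i1, i2, M, hcard, hcols, hb⟩ := h
  set Φ : (β → ZMod p) →ₗ[ZMod p] ((β × ZMod p) ⊕ Unit → ZMod p) :=
    (extl (ZMod p) (β × ZMod p) Unit).comp
      (LinearMap.funLeft (ZMod p) (ZMod p) Prod.fst) with hΦ
  have hΦ_apply : ∀ (u : β → ZMod p) (x), Φ u x = Sum.elim (fun y => u y.1) 0 x := by
    intro u x
    cases x <;> rfl
  set r₀ : (β × ZMod p) ⊕ Unit → ZMod p := Sum.elim (fun y => y.2) 1 with hr₀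
  set M' : Matrix (Option α) ((β × ZMod p) ⊕ Unit) (ZMod p) :=
    fun i => i.elim r₀ (fun a => Φ (M a)) with hM'
  refine ⟨Option α, (β × ZMod p) ⊕ Unit, inferInstance, inferInstance, M', ?_, ?_, ?_⟩
  · simp [ZMod.card, hcard, Nat.mul_comm]
  · rintro (⟨j, a⟩ | j)
    · obtain ⟨i, hi⟩ := hcols j
      refine ⟨some i, ?_⟩
      simpa [hM', hΦ_apply] using hi
    · exact ⟨none, by simp [hM', hr₀]⟩
  · intro v hv
    have hrows : {w : (β × ZMod p) ⊕ Unit → ZMod p | ∃ i, w = M' i}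
        = {r₀} ∪ Φ '' {w | ∃ i, w = M i} := by
      ext w
      constructor
      · rintro ⟨(_ | i), rfl⟩
        · exact Or.inl rfl
        · exact Or.inr ⟨M i, ⟨i, rfl⟩, rfl⟩
      · rintro (rfl | ⟨u, ⟨i, rfl⟩, rfl⟩)
        · exact ⟨none, rfl⟩
        · exact ⟨some i, rfl⟩
    rw [hrows, Submodule.span_union, ← Submodule.map_span] at hv
    obtain ⟨x, hx, y, hy, rfl⟩ := Submodule.mem_sup.mp hv
    obtain ⟨t, rfl⟩ := Submodule.mem_span_singleton.mp hx
    obtain ⟨u, hu, rfl⟩ := hy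
    have hval : ∀ x, (t • r₀ + Φ u) x =
        Sum.elim (fun y : β × ZMod p => t * y.2 + u y.1) (fun _ => t) x := by
      intro x
      cases x with
      | inl y => simp [hr₀, hΦ_apply, Pi.add_apply, Pi.smul_apply, smul_eq_mul]
      | inr y => simp [hr₀, hΦ_apply, Pi.add_apply, Pi.smul_apply, smul_eq_mul]
    rw [hn_eq]
    simp only [hval]
    rw [Fintype.sum_sum_type, Fintype.sum_prod_type]
    by_cases ht : t = 0
    · subst ht
      simp only [zero_mul, zero_add, Sum.elim_inl, Sum.elim_inr, ne_eq, not_true_eq_false,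
        if_false, if_neg (fun h : (0:ZMod p) ≠ 0 => h rfl)]
      have : ∀ j : β, (∑ _a : ZMod p, if u j ≠ 0 then 1 else 0) =
          p * (if u j ≠ 0 then 1 else 0) := by
        intro j
        rw [Finset.sum_const, Finset.card_univ, ZMod.card, smul_eq_mul]
      calc (∑ j, ∑ _a : ZMod p, if u j ≠ 0 then 1 else 0) + ∑ _x : Unit, 0
          = ∑ j, p * (if u j ≠ 0 then 1 else 0) := by
            rw [Finset.sum_congr rfl (fun j _ => this j)]; simp
        _ = p * hammingNorm u := by rw [← Finset.mul_sum, hn_eq]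
        _ ≤ p * c := Nat.mul_le_mul_left p (hb u hu)
        _ ≤ _ := le_max_left _ _
    · have hinner : ∀ j : β, (∑ a : ZMod p, if t * a + u j ≠ 0 then 1 else 0) = p - 1 := by
        intro j
        have hbij : Function.Bijective (fun a : ZMod p => t * a + u j) := by
          rw [Finite.injective_iff_bijective.symm]
          intro a b hab
          exact mul_left_cancel₀ ht (add_right_cancel hab)
        rw [Function.Bijective.sum_comp hbij (fun b : ZMod p => if b ≠ 0 then 1 else 0)]
        have h1 : (∑ b : ZMod p, if b ≠ 0 then (1:ℕ) else 0)
            + (∑ b : ZMod p, if b = 0 then (1:ℕ) else 0) = p := by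
          rw [← Finset.sum_add_distrib]
          have : ∀ b : ZMod p, ((if b ≠ 0 then (1:ℕ) else 0) + (if b = 0 then 1 else 0)) = 1 := by
            intro b; by_cases hb0 : b = 0 <;> simp [hb0]
          rw [Finset.sum_congr rfl (fun b _ => this b)]
          simp [ZMod.card]
        have h2 : (∑ b : ZMod p, if b = 0 then (1:ℕ) else 0) = 1 := by
          rw [Finset.sum_ite_eq' Finset.univ (0 : ZMod p) (fun _ => 1)]
          simp
        omega
      simp only [Sum.elim_inl, Sum.elim_inr]
      erw [Finset.sum_congr rfl (fun j _ => hinner j)]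
      simp only [Finset.sum_const, Finset.card_univ, smul_eq_mul, mul_one]
      calc (Fintype.card β * (p - 1) + ∑ _x : Unit, if t ≠ 0 then 1 else 0)
          = n * (p-1) + 1 := by simp [hcard, ht]
        _ ≤ _ := le_max_right _ _

lemma sigmaP_succ (p k : ℕ) : sigmaP p (k + 1) = sigmaP p k * p + 1 := by
  rw [sigmaP, Finset.sum_range_succ', sigmaP]
  rw [Finset.sum_mul]
  simp [pow_succ]

lemma sigmaP_geom {p : ℕ} (hp : 1 ≤ p) (k : ℕ) : sigmaP p k * (p - 1) + 1 = p ^ (k + 1) := by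
  induction k with
  | zero =>
    simp [sigmaP]
    omega
  | succ k ih =>
    have : sigmaP p (k + 1) * (p - 1) + 1
        = (sigmaP p k * (p - 1) + 1) + p ^ (k + 1) * (p - 1) := by
      rw [sigmaP, Finset.sum_range_succ, ← sigmaP]
      ring
    rw [this, ih, show p ^ (k+1) + p ^ (k+1) * (p-1) = p ^ (k+1) * (1 + (p-1)) by ring,
      show 1 + (p - 1) = p by omega, ← pow_succ]

lemma goodP_one (p : ℕ) [hp : Fact p.Prime] : GoodP p 1 1 := by
  refine ⟨Unit, Unit, inferInstance, inferInstance, fun _ _ => 1, by simp, ?_, ?_⟩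
  · exact fun _ => ⟨(), one_ne_zero⟩
  · intro v _
    rw [hn_eq]
    have : ∀ i : Unit, (if v i ≠ 0 then (1:ℕ) else 0) ≤ 1 := by
      intro i; split <;> simp
    exact le_trans (Finset.sum_le_sum fun i _ => this i) (by simp)

lemma goodP_sigma (p : ℕ) [hp : Fact p.Prime] (k : ℕ) : GoodP p (sigmaP p k) (p ^ k) := by
  induction k with
  | zero =>
    have h1 : sigmaP p 0 = 1 := by simp [sigmaP]
    rw [h1, pow_zero]
    exact goodP_one p
  | succ k ih =>
    have := goodP_step ih
    rw [sigmaP_succ]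
    have hmax : max (p * p ^ k) (sigmaP p k * (p - 1) + 1) = p ^ (k + 1) := by
      rw [sigmaP_geom hp.out.one_lt.le k, ← pow_succ']
      exact max_self _
    rwa [hmax] at this

lemma goodP_smul {p n c : ℕ} (h : GoodP p n c) (b : ℕ) : GoodP p (b * n) (b * c) := by
  induction b with
  | zero => simpa using goodP_zero p
  | succ b ih =>
    rw [Nat.succ_mul, Nat.succ_mul]
    exact goodP_add ih h

theorem statement5 (p : ℕ) (hp : p.Prime) (k n : ℕ) (hn : 1 ≤ n)
    (b : ℕ → ℕ)
    (hnsum : n = ∑ j ∈ Finset.range (k + 1), b j * sigmaP p j) :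
    lambdaP p n ≤ ∑ j ∈ Finset.range (k + 1), b j * p ^ j := by
  haveI : Fact p.Prime := ⟨hp⟩
  subst hnsum
  apply goodP_lambda
  have : ∀ s : Finset ℕ,
      GoodP p (∑ j ∈ s, b j * sigmaP p j) (∑ j ∈ s, b j * p ^ j) := by
    intro s
    induction s using Finset.induction_on with
    | empty => simpa using goodP_zero p
    | insert _ _ hx ih =>
      rw [Finset.sum_insert hx, Finset.sum_insert hx]
      exact goodP_add (goodP_smul (goodP_sigma p _) _) ih
  exact this _
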